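/- Let P be a monic polynomial in k[X] over a nonzero commutative ring k. The following are equivalent: (1) the k-algebra k[X]/(P) is isomorphic to k^deg(P); (2) P factors as a product of monic degree-1 polynomials that are pairwise comaximal; (3) P factors as a product of monic degree-1 polynomials and P is comaximal with its derivative P'. -/

import Mathlib

open Polynomial Finset

section Aux
variable {k : Type*} [CommRing k]

lemma aux_isCoprime_X_sub_C_iff {a b : k} :
    IsCoprime (X - C a) (X - C b) ↔ IsUnit (a - b) := by
  constructor
  · rintro ⟨u, v, h⟩
    have := congrArg (Polynomial.eval a) h
    simp at this
    exact IsUnit.of_mul_eq_one (v.eval a) (by linear_combination this)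
  · exact fun h => isCoprime_X_sub_C_of_isUnit_sub h

lemma aux_isCoprime_X_sub_C_left {a : k} {g : k[X]} :
    IsCoprime (X - C a) g ↔ IsUnit (g.eval a) := by
  constructor
  · rintro ⟨u, v, h⟩
    have := congrArg (Polynomial.eval a) h
    simp at this
    exact IsUnit.of_mul_eq_one (v.eval a) (by linear_combination this)
  · rintro ⟨w, hw⟩
    obtain ⟨q, hq⟩ : (X - C a) ∣ (g - C (g.eval a)) := by
      apply dvd_iff_isRoot.mpr; simp [IsRoot]
    refine ⟨-C (↑w⁻¹ : k) * q, C (↑w⁻¹ : k), ?_⟩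
    have hinv : (↑w⁻¹ : k) * g.eval a = 1 := by
      rw [← hw]; exact w.inv_mul
    have hg : g = (X - C a) * q + C (g.eval a) := by linear_combination hq
    have hC : (C (↑w⁻¹ : k)) * C (g.eval a) = 1 := by rw [← C_mul, hinv, C_1]
    rw [hg]
    linear_combination hC

lemma aux_eval_derivative {n : ℕ} (a : Fin n → k) (i : Fin n) :
    (Polynomial.derivative (∏ j, (X - C (a j)))).eval (a i) =
      ∏ j ∈ Finset.univ.erase i, (a i - a j) := by
  have h : (∏ j, (X - C (a j))) =
      (X - C (a i)) * ∏ j ∈ Finset.univ.erase i, (X - C (a j)) :=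
    (Finset.mul_prod_erase _ _ (Finset.mem_univ i)).symm
  rw [h, derivative_mul, derivative_X_sub_C]
  simp [eval_prod]

end Aux

theorem stmt_7 {k : Type*} [CommRing k] [Nontrivial k] (P : Polynomial k) (hP : P.Monic) :
    List.TFAE
      [ Nonempty ((Polynomial k ⧸ Ideal.span {P}) ≃ₐ[k] (Fin P.natDegree → k)),
        ∃ a : Fin P.natDegree → k,
          P = ∏ i, (Polynomial.X - Polynomial.C (a i)) ∧
          ∀ i j, i ≠ j →
            IsCoprime (Polynomial.X - Polynomial.C (a i)) (Polynomial.X - Polynomial.C (a j)),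
        (∃ a : Fin P.natDegree → k, P = ∏ i, (Polynomial.X - Polynomial.C (a i))) ∧
          IsCoprime P (Polynomial.derivative P) ] := by
  set n := P.natDegree with hn
  tfae_have 2 → 3 := by
    rintro ⟨a, hPa, hco⟩
    refine ⟨⟨a, hPa⟩, ?_⟩
    have hunit : ∀ i j : Fin n, i ≠ j → IsUnit (a i - a j) := fun i j hij =>
      aux_isCoprime_X_sub_C_iff.mp (hco i j hij)
    rw [hPa]
    apply IsCoprime.prod_left
    intro i _
    rw [aux_isCoprime_X_sub_C_left, ← hPa, hPa, aux_eval_derivative]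
    exact Finset.prod_induction _ IsUnit (fun _ _ => IsUnit.mul) isUnit_one
      fun j hj => hunit i j (Finset.ne_of_mem_erase hj).symm
  tfae_have 3 → 2 := by
    rintro ⟨⟨a, hPa⟩, hco⟩
    refine ⟨a, hPa, fun i j hij => ?_⟩
    have h1 : IsCoprime (X - C (a i)) (Polynomial.derivative P) :=
      hco.of_isCoprime_of_dvd_left (hPa ▸ Finset.dvd_prod_of_mem _ (Finset.mem_univ i))
    have h2 : IsUnit ((Polynomial.derivative P).eval (a i)) :=
      aux_isCoprime_X_sub_C_left.mp h1
    rw [hPa, aux_eval_derivative] at h2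
    exact aux_isCoprime_X_sub_C_iff.mpr <|
      isUnit_of_dvd_unit
        (Finset.dvd_prod_of_mem (fun m => a i - a m)
          (Finset.mem_erase.mpr ⟨hij.symm, Finset.mem_univ j⟩)) h2
  tfae_have 2 → 1 := by
    rintro ⟨a, hPa, hco⟩
    have hideal : Pairwise (Function.onFun IsCoprime fun i : Fin n => Ideal.span {X - C (a i)}) := by
      intro i j hij
      exact (Ideal.isCoprime_span_singleton_iff _ _).mpr (hco i j hij)
    have hinf : (⨅ i, Ideal.span {X - C (a i)}) = Ideal.span {P} := by
      rw [Ideal.iInf_span_singleton (fun i j hij => hco i j hij), ← hPa]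
    let e1 : (Polynomial k ⧸ Ideal.span {P}) ≃ₐ[k]
        (Polynomial k ⧸ ⨅ i : Fin n, Ideal.span {X - C (a i)}) :=
      Ideal.quotientEquivAlgOfEq k hinf.symm
    let e2 : (Polynomial k ⧸ ⨅ i : Fin n, Ideal.span {X - C (a i)}) ≃+*
        ∀ i : Fin n, Polynomial k ⧸ Ideal.span {X - C (a i)} :=
      Ideal.quotientInfRingEquivPiQuotient _ hideal
    let e2' : (Polynomial k ⧸ ⨅ i : Fin n, Ideal.span {X - C (a i)}) ≃ₐ[k]
        ∀ i : Fin n, Polynomial k ⧸ Ideal.span {X - C (a i)} :=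
      AlgEquiv.ofRingEquiv (f := e2) fun r => rfl
    let e3 : (∀ i : Fin n, Polynomial k ⧸ Ideal.span {X - C (a i)}) ≃ₐ[k] (Fin n → k) :=
      AlgEquiv.piCongrRight fun i => Polynomial.quotientSpanXSubCAlgEquiv (a i)
    exact ⟨(e1.trans e2').trans e3⟩
  tfae_have 1 → 2 := by
    rintro ⟨φ⟩
    set a : Fin n → k := fun i => φ (Ideal.Quotient.mk _ X) i with ha
    have heval : ∀ (i : Fin n) (q : k[X]),
        φ (Ideal.Quotient.mk _ q) i = q.eval (a i) := by
      intro i q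
      let ψ : k[X] →ₐ[k] k :=
        (Pi.evalAlgHom k (fun _ => k) i).comp (φ.toAlgHom.comp (Ideal.Quotient.mkₐ k _))
      have hψ : ψ = Polynomial.aeval (a i) := by
        apply Polynomial.algHom_ext
        simp [ψ, ha]
      simpa [ψ, Polynomial.coe_aeval_eq_eval] using DFunLike.congr_fun hψ q
    have hroot : ∀ i : Fin n, P.eval (a i) = 0 := by
      intro i
      have : (Ideal.Quotient.mk (Ideal.span {P}) P) = 0 := by
        rw [Ideal.Quotient.eq_zero_iff_mem]
        exact Ideal.subset_span rfl
      rw [← heval i P, this, map_zero]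
      rfl
    have hunit : ∀ i j : Fin n, i ≠ j → IsUnit (a i - a j) := by
      intro i j hij
      obtain ⟨y, hy⟩ := φ.surjective (Pi.single i 1)
      obtain ⟨q, rfl⟩ := Ideal.Quotient.mk_surjective y
      have hqi : q.eval (a i) = 1 := by
        rw [← heval i q, hy, Pi.single_eq_same]
      have hqj : q.eval (a j) = 0 := by
        rw [← heval j q, hy, Pi.single_eq_of_ne (Ne.symm hij)]
      obtain ⟨h, hh⟩ : (X - C (a j)) ∣ q := dvd_iff_isRoot.mpr hqj
      refine IsUnit.of_mul_eq_one (h.eval (a i)) ?_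
      have := congrArg (Polynomial.eval (a i)) hh
      simp at this
      rw [← hqi, this]
    have hco : ∀ i j : Fin n, i ≠ j →
        IsCoprime (X - C (a i)) (X - C (a j)) := fun i j hij =>
      aux_isCoprime_X_sub_C_iff.mpr (hunit i j hij)
    refine ⟨a, ?_, hco⟩
    -- P = ∏ (X - C (a i))
    set Q : k[X] := ∏ i, (X - C (a i)) with hQ
    have hQm : Q.Monic := monic_prod_of_monic _ _ fun i _ => monic_X_sub_C _
    have hQdeg : Q.natDegree = n := by
      rw [hQ, natDegree_prod_of_monic _ _ fun i _ => monic_X_sub_C _]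
      simp
    have hdvd : Q ∣ P := by
      rw [hQ]
      apply Finset.prod_dvd_of_coprime
      · intro i _ j _ hij
        exact hco i j hij
      · intro i _
        exact dvd_iff_isRoot.mpr (hroot i)
    by_contra hne
    have hsub : Q ∣ P - Q := (dvd_sub_right hdvd).mpr dvd_rfl
    have hd0 : P - Q ≠ 0 := fun h => hne (by linear_combination (h : P - Q = 0))
    obtain ⟨c, hc⟩ := hsub
    have hc0 : c ≠ 0 := by rintro rfl; simp at hc; exact hd0 hc
    have hge : n ≤ (P - Q).natDegree := by
      rw [hc, hQm.natDegree_mul' hc0, hQdeg]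
      exact Nat.le_add_right _ _
    have hlt : (P - Q).degree < P.degree :=
      degree_sub_lt
        (by rw [degree_eq_natDegree hP.ne_zero, degree_eq_natDegree hQm.ne_zero, hQdeg])
        hP.ne_zero (by rw [hP.leadingCoeff, hQm.leadingCoeff])
    rw [degree_eq_natDegree hd0, degree_eq_natDegree hP.ne_zero, Nat.cast_lt] at hlt
    omega
  tfae_finish
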